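/- For a ∈ (-1,1), sinc_a(t) = (1+a) sinc(t/2) · Re(F(e^{it}) e^{it/2}), where F(z) = Σ_{n≥0} a^n z^n and sinc(t) = sin(t)/t. -/

import Mathlib

noncomputable def poissonKer (a t : ℝ) : ℝ :=
  (1 - a ^ 2) / (1 - 2 * a * Real.cos t + a ^ 2)

noncomputable def rsinc (t : ℝ) : ℝ := if t = 0 then 1 else Real.sin t / t

noncomputable def sincA (a t : ℝ) : ℝ := poissonKer a t * rsinc t

lemma rsinc_half (t : ℝ) : rsinc t = rsinc (t/2) * Real.cos (t/2) := by
  rcases eq_or_ne t 0 with h | h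
  · simp [h, rsinc]
  · have h2 : t/2 ≠ 0 := div_ne_zero h two_ne_zero
    rw [rsinc, rsinc, if_neg h, if_neg h2]
    have hs : Real.sin t = 2 * Real.sin (t/2) * Real.cos (t/2) := by
      rw [show Real.sin t = Real.sin (2*(t/2)) by congr 1; ring, Real.sin_two_mul]
    rw [hs, div_div_eq_mul_div, div_mul_eq_mul_div, div_eq_div_iff h (by simpa using h)]
    ring

/-- sinc_a(t) = (1+a) sinc(t/2) Re(F(e^{it}) e^{it/2}),
where F(z) = Σ_{n≥0} aⁿ zⁿ. -/
theorem sincA_via_F (a : ℝ) (ha : a ∈ Set.Ioo (-1 : ℝ) 1) (t : ℝ) :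
    sincA a t = (1 + a) * rsinc (t / 2) *
      ((∑' n : ℕ, (a : ℂ) ^ n * Complex.exp (Complex.I * t) ^ n) *
        Complex.exp (Complex.I * t / 2)).re := by
  have ha' : |a| < 1 := abs_lt.mpr ⟨ha.1, ha.2⟩
  have hnorm : ‖(a : ℂ) * Complex.exp (Complex.I * t)‖ < 1 := by
    simp only [norm_mul, Complex.norm_exp, Complex.norm_real]
    simpa using ha'
  have hsum : (∑' n : ℕ, (a : ℂ) ^ n * Complex.exp (Complex.I * t) ^ n)
      = (1 - (a : ℂ) * Complex.exp (Complex.I * t))⁻¹ := by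
    have := tsum_geometric_of_norm_lt_one hnorm
    simpa [mul_pow] using this
  set w : ℂ := Complex.exp (Complex.I * t / 2) with hw
  have hwne : w ≠ 0 := Complex.exp_ne_zero _
  have hw2 : Complex.exp (Complex.I * t) = w * w := by
    rw [hw, ← Complex.exp_add]; ring_nf
  have hz : (1 - (a : ℂ) * Complex.exp (Complex.I * t))⁻¹ * w
      = (w⁻¹ - (a : ℂ) * w)⁻¹ := by
    have hfac : w⁻¹ - (a:ℂ)*w = (1 - (a:ℂ)*(w*w)) * w⁻¹ := by
      field_simp
    rw [hw2, hfac, mul_inv, inv_inv]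
  have e1 : w = Complex.cos (t/2) + Complex.sin (t/2) * Complex.I := by
    rw [hw, show Complex.I * t / 2 = ((t:ℂ)/2) * Complex.I by ring, Complex.exp_mul_I]
  have e2 : w⁻¹ = Complex.cos (t/2) - Complex.sin (t/2) * Complex.I := by
    rw [hw, ← Complex.exp_neg, show -(Complex.I * t / 2) = (-((t:ℂ)/2)) * Complex.I by ring,
      Complex.exp_mul_I, Complex.cos_neg, Complex.sin_neg]
    ring
  have hcos : Real.cos t = 1 - 2 * Real.sin (t/2)^2 := by
    have h1 := Real.cos_two_mul (t/2)
    have h2 : Real.sin (t/2)^2 + Real.cos (t/2)^2 = 1 := Real.sin_sq_add_cos_sq _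
    rw [show (2:ℝ)*(t/2) = t by ring] at h1
    linarith
  have hre : ((w⁻¹ - (a : ℂ) * w)⁻¹).re
      = (1 - a) * Real.cos (t/2) / (1 - 2*a*Real.cos t + a^2) := by
    rw [Complex.inv_re, e2, e1]
    have hr : (Complex.cos (t/2) - Complex.sin (t/2) * Complex.I
        - (a:ℂ) * (Complex.cos (t/2) + Complex.sin (t/2) * Complex.I))
        = Complex.ofReal ((1-a) * Real.cos (t/2)) + Complex.ofReal (-(1+a) * Real.sin (t/2)) * Complex.I := by
      rw [show ((t:ℂ)/2) = ((t/2 : ℝ) : ℂ) by push_cast; ring,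
        ← Complex.ofReal_cos, ← Complex.ofReal_sin]
      push_cast
      ring
    rw [hr]
    rw [Complex.add_re, Complex.ofReal_re, Complex.mul_I_re, Complex.ofReal_im,
      Complex.normSq_add_mul_I]
    have h2 : Real.cos (t/2)^2 + Real.sin (t/2)^2 = 1 := Real.cos_sq_add_sin_sq _
    rw [hcos]
    have : ((1-a) * Real.cos (t/2))^2 + (-(1+a) * Real.sin (t/2))^2
        = 1 - 2*a*(1 - 2*Real.sin (t/2)^2) + a^2 := by linear_combination (1 - 2*a + a^2) * h2
    rw [this]
    ring
  rw [hsum, hz, hre, sincA, poissonKer, rsinc_half t]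
  ring
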